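/- Let ε > 0 and ω ∈ ℝ. Define E_{iω}(n) := ((1 + iεω/2)/(1 - iεω/2))^n and E_{-iω}(n) := ((1 - iεω/2)/(1 + iεω/2))^n for n ∈ ℤ (these are defined since 1 ± iεω/2 ≠ 0), and set Cos_ω(n) := (E_{iω}(n) + E_{-iω}(n))/2 and Sin_ω(n) := (E_{iω}(n) - E_{-iω}(n))/(2i). Then for all n ∈ ℤ: Cos_ω(n) and Sin_ω(n) are real numbers; Cos_ω(n)² + Sin_ω(n)² = 1; (Cos_ω(n+1) - Cos_ω(n))/ε = -ω·(Sin_ω(n) + Sin_ω(n+1))/2; and (Sin_ω(n+1) - Sin_ω(n))/ε = ω·(Cos_ω(n) + Cos_ω(n+1))/2. -/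

import Mathlib

/-- E_{iω} on the time scale εℤ. -/
noncomputable def cayleyExpI (ε ω : ℝ) (n : ℤ) : ℂ :=
  ((1 + Complex.I * (ε : ℂ) * (ω : ℂ) / 2) / (1 - Complex.I * (ε : ℂ) * (ω : ℂ) / 2)) ^ n

/-- E_{-iω} on the time scale εℤ. -/
noncomputable def cayleyExpNegI (ε ω : ℝ) (n : ℤ) : ℂ :=
  ((1 - Complex.I * (ε : ℂ) * (ω : ℂ) / 2) / (1 + Complex.I * (ε : ℂ) * (ω : ℂ) / 2)) ^ n

/-- The Cayley-cosine on εℤ. -/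
noncomputable def cayleyCos (ε ω : ℝ) (n : ℤ) : ℂ :=
  (cayleyExpI ε ω n + cayleyExpNegI ε ω n) / 2

/-- The Cayley-sine on εℤ. -/
noncomputable def cayleySin (ε ω : ℝ) (n : ℤ) : ℂ :=
  (cayleyExpI ε ω n - cayleyExpNegI ε ω n) / (2 * Complex.I)

private lemma aux_div2I (x : ℂ) : x / (2 * Complex.I) = x * (-Complex.I) / 2 := by
  rw [div_eq_div_iff (by simp [Complex.I_ne_zero]) two_ne_zero]
  linear_combination (2 : ℂ) * x * Complex.I_sq

private lemma aux_cos_diff (ε ω : ℝ) (hεc : (ε : ℂ) ≠ 0) (u v a b : ℂ)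
    (ha : a ≠ 0) (hb : b ≠ 0)
    (hab : a - b = Complex.I * (ε : ℂ) * ω) (hs : a + b = 2) :
    ((u * (a / b) + v * (b / a)) / 2 - (u + v) / 2) / (ε : ℂ)
      = -(ω : ℂ) * ((u - v) * (-Complex.I) / 2
          + (u * (a / b) - v * (b / a)) * (-Complex.I) / 2) / 2 := by
  field_simp
  linear_combination (2 * (u * a - v * b)) * hab
    - ((ε : ℂ) * (ω : ℂ) * Complex.I * (u * a - v * b)) * hs

private lemma aux_sin_diff (ε ω : ℝ) (hεc : (ε : ℂ) ≠ 0) (u v a b : ℂ)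
    (ha : a ≠ 0) (hb : b ≠ 0)
    (hab : a - b = Complex.I * (ε : ℂ) * ω) (hs : a + b = 2) :
    ((u * (a / b) - v * (b / a)) * (-Complex.I) / 2 - (u - v) * (-Complex.I) / 2) / (ε : ℂ)
      = (ω : ℂ) * ((u + v) / 2 + (u * (a / b) + v * (b / a)) / 2) / 2 := by
  field_simp
  linear_combination (-2 * Complex.I * (u * a + v * b)) * hab
    + (-(ε : ℂ) * (ω : ℂ) * (u * a + v * b)) * hs
    + (-2 * (ε : ℂ) * (ω : ℂ) * (u * a + v * b)) * Complex.I_sq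

/-- Reality, the Pythagorean identity Cos² + Sin² = 1, and the
first-order difference relations for Cayley-trigonometric functions on εℤ. -/
theorem stmt11 (ε : ℝ) (hε : 0 < ε) (ω : ℝ) :
    ∀ n : ℤ,
      (cayleyCos ε ω n).im = 0 ∧
      (cayleySin ε ω n).im = 0 ∧
      cayleyCos ε ω n ^ 2 + cayleySin ε ω n ^ 2 = 1 ∧
      (cayleyCos ε ω (n + 1) - cayleyCos ε ω n) / (ε : ℂ)
        = -(ω : ℂ) * (cayleySin ε ω n + cayleySin ε ω (n + 1)) / 2 ∧
      (cayleySin ε ω (n + 1) - cayleySin ε ω n) / (ε : ℂ)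
        = (ω : ℂ) * (cayleyCos ε ω n + cayleyCos ε ω (n + 1)) / 2 := by
  intro n
  have hεc : (ε : ℂ) ≠ 0 := Complex.ofReal_ne_zero.mpr hε.ne'
  set a : ℂ := 1 + Complex.I * (ε : ℂ) * (ω : ℂ) / 2 with ha_def
  set b : ℂ := 1 - Complex.I * (ε : ℂ) * (ω : ℂ) / 2 with hb_def
  have ha : a ≠ 0 := by
    intro h
    have : a.re = 0 := by rw [h]; simp
    simp [ha_def] at this
  have hb : b ≠ 0 := by
    intro h
    have : b.re = 0 := by rw [h]; simp
    simp [hb_def] at this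
  have hab : a - b = Complex.I * (ε : ℂ) * (ω : ℂ) := by
    rw [ha_def, hb_def]; ring
  have hs : a + b = 2 := by rw [ha_def, hb_def]; ring
  have hz : (a / b) ≠ 0 := div_ne_zero ha hb
  have hw : (b / a) ≠ 0 := div_ne_zero hb ha
  have hca : (starRingEnd ℂ) a = b := by
    rw [ha_def, hb_def]
    simp [map_add, map_div₀, map_mul, Complex.conj_I, Complex.conj_ofReal, map_ofNat]
    ring
  have hcb : (starRingEnd ℂ) b = a := by
    rw [ha_def, hb_def]
    simp [map_sub, map_div₀, map_mul, Complex.conj_I, Complex.conj_ofReal, map_ofNat]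
    ring
  set u : ℂ := (a / b) ^ n with hu_def
  set v : ℂ := (b / a) ^ n with hv_def
  have hcu : (starRingEnd ℂ) u = v := by
    rw [hu_def, hv_def, map_zpow₀, map_div₀, hca, hcb]
  have huv : u * v = 1 := by
    rw [hu_def, hv_def, ← mul_zpow, div_mul_div_comm, mul_comm a b,
      div_self (mul_ne_zero hb ha), one_zpow]
  have hEI : cayleyExpI ε ω n = u := rfl
  have hEN : cayleyExpNegI ε ω n = v := rfl
  have hEI1 : cayleyExpI ε ω (n + 1) = u * (a / b) := by
    show (a / b) ^ (n + 1) = _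
    rw [zpow_add_one₀ hz, hu_def]
  have hEN1 : cayleyExpNegI ε ω (n + 1) = v * (b / a) := by
    show (b / a) ^ (n + 1) = _
    rw [zpow_add_one₀ hw, hv_def]
  have hcos : cayleyCos ε ω n = (u + v) / 2 := by rw [cayleyCos, hEI, hEN]
  have hsin : cayleySin ε ω n = (u - v) * (-Complex.I) / 2 := by
    rw [cayleySin, hEI, hEN, aux_div2I]
  have hcos1 : cayleyCos ε ω (n + 1) = (u * (a / b) + v * (b / a)) / 2 := by
    rw [cayleyCos, hEI1, hEN1]
  have hsin1 : cayleySin ε ω (n + 1) = (u * (a / b) - v * (b / a)) * (-Complex.I) / 2 := by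
    rw [cayleySin, hEI1, hEN1, aux_div2I]
  refine ⟨?_, ?_, ?_, ?_, ?_⟩
  · rw [hcos, ← hcu, Complex.add_conj]
    simp
  · rw [hsin, ← hcu, Complex.sub_conj]
    rw [mul_assoc, show Complex.I * -Complex.I = 1 by rw [mul_neg, Complex.I_mul_I]; ring,
      mul_one]
    simp
  · rw [hcos, hsin]
    have h2I : (-Complex.I) ^ 2 = -1 := by rw [neg_pow, Complex.I_sq]; ring
    rw [div_pow, div_pow, mul_pow, h2I]
    linear_combination huv
  · rw [hcos, hcos1, hsin, hsin1]
    exact aux_cos_diff ε ω hεc u v a b ha hb hab hs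
  · rw [hcos, hcos1, hsin, hsin1]
    exact aux_sin_diff ε ω hεc u v a b ha hb hab hs
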